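/- There exists a constant c > 0, depending only on C₃, C₆, C₇ and η₂, such that |V_t(x,z) − A_t(x) z| ≤ c e^{c|t|} |z|^{1+η₂} for all t ∈ ℝ and all x, z ∈ ℝ^d. -/

import Mathlib

open Set Real

section helpers

variable {E : Type*} [NormedAddCommGroup E] [NormedSpace ℝ E]

/-- Grönwall wrapper on `[0, T]`. -/
lemma gron_aux {f f' : ℝ → E} {K ε δ T : ℝ}
    (hf : ∀ s, HasDerivAt f (f' s) s)
    (h0 : ‖f 0‖ ≤ δ)
    (hb : ∀ s ∈ Set.Icc (0:ℝ) T, ‖f' s‖ ≤ K * ‖f s‖ + ε)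
    (hT : 0 ≤ T) : ‖f T‖ ≤ gronwallBound δ K ε T := by
  have := norm_le_gronwallBound_of_norm_deriv_right_le (f := f) (f' := f') (a := 0) (b := T)
    (δ := δ) (K := K) (ε := ε)
    (fun s _ => (hf s).continuousAt.continuousWithinAt)
    (fun s _ => (hf s).hasDerivWithinAt)
    h0 (fun s hs => hb s (Set.Ico_subset_Icc_self hs))
    T (Set.right_mem_Icc.2 hT)
  simpa using this

/-- global Lipschitz bound from bounded derivative. -/
lemma lip_aux {b : E → E} {C : ℝ} (hb : Differentiable ℝ b)
    (hb1 : ∀ x, ‖fderiv ℝ b x‖ ≤ C) (u v : E) : ‖b u - b v‖ ≤ C * ‖u - v‖ :=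
  Convex.norm_image_sub_le_of_norm_hasFDerivWithin_le (f' := fderiv ℝ b)
    (fun x _ => (hb x).hasFDerivAt.hasFDerivWithinAt)
    (fun x _ => hb1 x) convex_univ (mem_univ v) (mem_univ u)

/-- first-order Taylor bound from Hölder derivative. -/
lemma taylor_aux {b : E → E} {C₇ η₂ : ℝ} (hC₇ : 0 ≤ C₇) (hη₂ : 0 < η₂)
    (hb : Differentiable ℝ b)
    (hb2 : ∀ x y, ‖fderiv ℝ b x - fderiv ℝ b y‖ ≤ C₇ * ‖x - y‖ ^ η₂)
    (a h : E) :
    ‖b (a + h) - b a - fderiv ℝ b a h‖ ≤ C₇ * ‖h‖ ^ η₂ * ‖h‖ := by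
  set g : E → E := fun x => b x - fderiv ℝ b a x with hg
  have hgd : ∀ x, HasFDerivAt g (fderiv ℝ b x - fderiv ℝ b a) x := fun x =>
    ((hb x).hasFDerivAt).sub ((fderiv ℝ b a).hasFDerivAt)
  have key := Convex.norm_image_sub_le_of_norm_hasFDerivWithin_le
    (f := g) (f' := fun x => fderiv ℝ b x - fderiv ℝ b a) (s := Metric.closedBall a ‖h‖)
    (C := C₇ * ‖h‖ ^ η₂)
    (fun x _ => (hgd x).hasFDerivWithinAt)
    (fun x hx => by
      refine (hb2 x a).trans ?_
      have hxa : ‖x - a‖ ≤ ‖h‖ := by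
        simpa [dist_eq_norm] using hx
      exact mul_le_mul_of_nonneg_left
        (Real.rpow_le_rpow (norm_nonneg _) hxa (le_of_lt hη₂)) hC₇)
    (convex_closedBall a ‖h‖)
    (x := a) (y := a + h)
    (Metric.mem_closedBall_self (norm_nonneg h))
    (by simp [Metric.mem_closedBall, dist_eq_norm])
  have heq : g (a + h) - g a = b (a + h) - b a - fderiv ℝ b a h := by
    simp only [hg, map_add]
    abel
  have hnorm : ‖(a + h) - a‖ = ‖h‖ := by simp
  rw [heq, hnorm] at key
  exact key

end helpers

section flow

variable {E : Type*} [NormedAddCommGroup E] [NormedSpace ℝ E]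
variable {b : E → E} {C₆ : ℝ}
variable {κ : ℝ → E → E}

/-- `κ t (κ (-t) x) = x` for `t ≥ 0`, by uniqueness (Grönwall). -/
lemma flow_inv (hC₆ : 0 < C₆) (hb : Differentiable ℝ b)
    (hb1 : ∀ x, ‖fderiv ℝ b x‖ ≤ C₆)
    (hκ0 : ∀ x, κ 0 x = x)
    (hκ' : ∀ (t : ℝ) (x : E), HasDerivAt (fun s => κ s x) (-(b (κ t x))) t)
    {t : ℝ} (ht : 0 ≤ t) (x : E) : κ t (κ (-t) x) = x := by
  set y := κ (-t) x with hy
  set f : ℝ → E := fun s => κ s y - κ (s - t) x with hf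
  have hshift : ∀ s : ℝ, HasDerivAt (fun u => κ (u - t) x) (-(b (κ (s - t) x))) s := by
    intro s
    have h1 : HasDerivAt (fun u : ℝ => u - t) 1 s := (hasDerivAt_id s).sub_const t
    have := (hκ' (s - t) x).scomp s h1
    simpa [Function.comp_def] using this
  have hfd : ∀ s : ℝ, HasDerivAt f (-(b (κ s y)) - -(b (κ (s - t) x))) s := fun s =>
    (hκ' s y).sub (hshift s)
  have hf0 : ‖f 0‖ ≤ 0 := by
    simp [hf, hκ0, hy, zero_sub]
  have hbound : ∀ s ∈ Set.Icc (0:ℝ) t,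
      ‖-(b (κ s y)) - -(b (κ (s - t) x))‖ ≤ C₆ * ‖f s‖ + 0 := by
    intro s _
    have e1 : -(b (κ s y)) - -(b (κ (s - t) x)) = b (κ (s - t) x) - b (κ s y) := by abel
    have e2 : κ (s - t) x - κ s y = -(f s) := by simp [hf]
    rw [e1, add_zero]
    calc ‖b (κ (s - t) x) - b (κ s y)‖ ≤ C₆ * ‖κ (s - t) x - κ s y‖ :=
          lip_aux hb hb1 (κ (s - t) x) (κ s y)
      _ = C₆ * ‖f s‖ := by rw [e2, norm_neg]
  have := gron_aux hfd hf0 hbound ht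
  rw [gronwallBound_ε0, zero_mul] at this
  have hft : f t = 0 := by
    have h1 : ‖f t‖ ≤ 0 := this
    simpa using norm_le_zero_iff.1 (by simpa using h1)
  have : κ t y - κ 0 x = 0 := by simpa [hf] using hft
  rw [hκ0] at this
  exact sub_eq_zero.1 this

end flow

section key

variable {E : Type*} [NormedAddCommGroup E] [NormedSpace ℝ E]

/-- Key linearization estimate for the flow, `t ≥ 0`. -/
lemma key_est {b : E → E} {C₆ C₇ η₂ : ℝ} (hC₆ : 0 < C₆) (hC₇ : 0 < C₇)
    (hη₂ : 0 < η₂) (hη₂' : η₂ ≤ 1)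
    (hb : Differentiable ℝ b)
    (hb1 : ∀ x, ‖fderiv ℝ b x‖ ≤ C₆)
    (hb2 : ∀ x y, ‖fderiv ℝ b x - fderiv ℝ b y‖ ≤ C₇ * ‖x - y‖ ^ η₂)
    {κ : ℝ → E → E} {Dκ : ℝ → E → (E →L[ℝ] E)}
    (hκ0 : ∀ x, κ 0 x = x)
    (hκ' : ∀ (t : ℝ) (x : E), HasDerivAt (fun s => κ s x) (-(b (κ t x))) t)
    (hDκ0 : ∀ x, Dκ 0 x = ContinuousLinearMap.id ℝ E)
    (hDκ' : ∀ (t : ℝ) (x : E),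
      HasDerivAt (fun s => Dκ s x) (-((fderiv ℝ b (κ t x)).comp (Dκ t x))) t)
    {t : ℝ} (ht : 0 ≤ t) (y w : E) :
    ‖κ t (y + w) - κ t y - (Dκ t y) w‖
      ≤ C₇ / C₆ * (‖w‖ * Real.exp (C₆ * t)) ^ (1 + η₂) * Real.exp (C₆ * t) := by
  -- the difference of flows
  set δ : ℝ → E := fun s => κ s (y + w) - κ s y with hδdef
  have hδd : ∀ s : ℝ, HasDerivAt δ (-(b (κ s (y + w))) - -(b (κ s y))) s := fun s =>
    (hκ' s (y + w)).sub (hκ' s y)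
  -- bound on δ
  have hδbound : ∀ s ∈ Set.Icc (0:ℝ) t, ‖δ s‖ ≤ ‖w‖ * Real.exp (C₆ * s) := by
    intro s hs
    have := gron_aux (f := δ) (f' := fun s => -(b (κ s (y + w))) - -(b (κ s y)))
      (K := C₆) (ε := 0) (δ := ‖w‖) (T := s) hδd
      (by simp [hδdef, hκ0])
      (fun u _ => by
        have e1 : -(b (κ u (y + w))) - -(b (κ u y)) = -(b (κ u (y + w)) - b (κ u y)) := by abel
        show ‖-(b (κ u (y + w))) - -(b (κ u y))‖ ≤ C₆ * ‖δ u‖ + 0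
        rw [e1, norm_neg, add_zero]
        exact lip_aux hb hb1 _ _) hs.1
    rwa [gronwallBound_ε0] at this
  -- the main function φ
  set φ : ℝ → E := fun s => κ s (y + w) - κ s y - (Dκ s y) w with hφdef
  set φ' : ℝ → E := fun s =>
    -(b (κ s (y + w))) - -(b (κ s y)) + (fderiv ℝ b (κ s y)) ((Dκ s y) w) with hφ'def
  have hφd : ∀ s : ℝ, HasDerivAt φ (φ' s) s := by
    intro s
    have h1 : HasDerivAt (fun s => (Dκ s y) w)
        ((-((fderiv ℝ b (κ s y)).comp (Dκ s y))) w + (Dκ s y) 0) s :=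
      HasDerivAt.clm_apply (hDκ' s y) (hasDerivAt_const s w)
    have h2 := ((hκ' s (y + w)).sub (hκ' s y)).sub h1
    convert h2 using 1
    rfl
    simp [hφ'def]
  set M : ℝ := ‖w‖ * Real.exp (C₆ * t) with hM
  have hM0 : 0 ≤ M := mul_nonneg (norm_nonneg _) (Real.exp_pos _).le
  set ε : ℝ := C₇ * M ^ (1 + η₂) with hε
  have hφbound : ∀ s ∈ Set.Icc (0:ℝ) t, ‖φ' s‖ ≤ C₆ * ‖φ s‖ + ε := by
    intro s hs
    set L := fderiv ℝ b (κ s y) with hL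
    have hsum : κ s y + δ s = κ s (y + w) := by simp [hδdef]
    have e1 : φ' s = -(b (κ s y + δ s) - b (κ s y) - L (δ s)) - L (φ s) := by
      rw [hsum]
      simp only [hφ'def, hφdef, hδdef, hL, map_sub]
      abel
    have htay := taylor_aux hC₇.le hη₂ hb hb2 (κ s y) (δ s)
    have hδs : ‖δ s‖ ≤ M := by
      refine (hδbound s hs).trans ?_
      exact mul_le_mul_of_nonneg_left
        (Real.exp_le_exp.2 (mul_le_mul_of_nonneg_left hs.2 hC₆.le)) (norm_nonneg _)
    have hδpow : ‖δ s‖ ^ η₂ * ‖δ s‖ ≤ M ^ (1 + η₂) := by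
      have h1 : ‖δ s‖ ^ η₂ ≤ M ^ η₂ := Real.rpow_le_rpow (norm_nonneg _) hδs hη₂.le
      have h2 : M ^ (1 + η₂) = M ^ (1:ℝ) * M ^ η₂ := Real.rpow_add' hM0 (by positivity)
      rw [h2, Real.rpow_one]
      calc ‖δ s‖ ^ η₂ * ‖δ s‖ ≤ M ^ η₂ * M :=
            mul_le_mul h1 hδs (norm_nonneg _) (Real.rpow_nonneg hM0 _)
        _ = M * M ^ η₂ := mul_comm _ _
    calc ‖φ' s‖ ≤ ‖b (κ s y + δ s) - b (κ s y) - L (δ s)‖ + ‖L (φ s)‖ := by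
          rw [e1]; exact (norm_sub_le _ _).trans (by rw [norm_neg])
      _ ≤ C₇ * ‖δ s‖ ^ η₂ * ‖δ s‖ + C₆ * ‖φ s‖ := by
          exact add_le_add htay ((L.le_opNorm _).trans
            (mul_le_mul_of_nonneg_right (hb1 _) (norm_nonneg _)))
      _ ≤ C₆ * ‖φ s‖ + ε := by
          rw [add_comm]
          gcongr
          calc C₇ * ‖δ s‖ ^ η₂ * ‖δ s‖ = C₇ * (‖δ s‖ ^ η₂ * ‖δ s‖) := by ring
            _ ≤ C₇ * M ^ (1 + η₂) := by gcongr
  have hφ0 : ‖φ 0‖ ≤ 0 := by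
    simp [hφdef, hκ0, hDκ0]
  have hmain := gron_aux hφd hφ0 hφbound ht
  have hε0 : 0 ≤ ε := by positivity
  rw [gronwallBound_of_K_ne_0 hC₆.ne'] at hmain
  simp only [zero_mul, zero_add] at hmain
  refine hmain.trans ?_
  rw [hε, hM]
  have h1 : Real.exp (C₆ * t) - 1 ≤ Real.exp (C₆ * t) := by linarith
  calc C₇ * (‖w‖ * Real.exp (C₆ * t)) ^ (1 + η₂) / C₆ * (Real.exp (C₆ * t) - 1)
      ≤ C₇ * (‖w‖ * Real.exp (C₆ * t)) ^ (1 + η₂) / C₆ * Real.exp (C₆ * t) := by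
        gcongr
    _ = C₇ / C₆ * (‖w‖ * Real.exp (C₆ * t)) ^ (1 + η₂) * Real.exp (C₆ * t) := by ring

end key

section main

variable {E : Type*} [NormedAddCommGroup E] [NormedSpace ℝ E]

lemma main_est {C₃ C₆ C₇ η₂ : ℝ} (hC₃ : 0 < C₃) (hC₆ : 0 < C₆) (hC₇ : 0 < C₇)
    (hη₂ : 0 < η₂) (hη₂' : η₂ ≤ 1)
    {b : E → E} (hb : Differentiable ℝ b)
    (hb1 : ∀ x, ‖fderiv ℝ b x‖ ≤ C₆)
    (hb2 : ∀ x y, ‖fderiv ℝ b x - fderiv ℝ b y‖ ≤ C₇ * ‖x - y‖ ^ η₂)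
    {A : E → (E →L[ℝ] E)} (hA : ∀ x, ‖A x‖ ≤ C₃)
    {κ : ℝ → E → E} {Dκ : ℝ → E → (E →L[ℝ] E)}
    (hκ0 : ∀ x, κ 0 x = x)
    (hκ' : ∀ (t : ℝ) (x : E), HasDerivAt (fun s => κ s x) (-(b (κ t x))) t)
    (hDκ0 : ∀ x, Dκ 0 x = ContinuousLinearMap.id ℝ E)
    (hDκ' : ∀ (t : ℝ) (x : E),
      HasDerivAt (fun s => Dκ s x) (-((fderiv ℝ b (κ t x)).comp (Dκ t x))) t)
    {t : ℝ} (ht : 0 ≤ t) (x z : E) :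
    ‖(κ t (κ (-t) x + A (κ (-t) x) z) - x) - (Dκ t (κ (-t) x)) (A (κ (-t) x) z)‖
      ≤ (C₇ / C₆ * (1 + C₃) ^ (2:ℝ)) * Real.exp (3 * C₆ * t) * ‖z‖ ^ (1 + η₂) := by
  set y := κ (-t) x with hy
  set w := A y z with hw
  have hx : κ t y = x := flow_inv hC₆ hb hb1 hκ0 hκ' ht x
  have hkey := key_est hC₆ hC₇ hη₂ hη₂' hb hb1 hb2 hκ0 hκ' hDκ0 hDκ' ht y w
  rw [hx] at hkey
  refine hkey.trans ?_
  have hwz : ‖w‖ ≤ C₃ * ‖z‖ := ((A y).le_opNorm z).trans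
    (mul_le_mul_of_nonneg_right (hA y) (norm_nonneg z))
  have hC₃' : C₃ ^ (1 + η₂) ≤ (1 + C₃) ^ (2:ℝ) :=
    (Real.rpow_le_rpow hC₃.le (by linarith) (by positivity)).trans
      (Real.rpow_le_rpow_of_exponent_le (by linarith) (by linarith))
  calc C₇ / C₆ * (‖w‖ * Real.exp (C₆ * t)) ^ (1 + η₂) * Real.exp (C₆ * t)
      ≤ C₇ / C₆ * ((C₃ * ‖z‖) * Real.exp (C₆ * t)) ^ (1 + η₂) * Real.exp (C₆ * t) := by
        have h1 : (‖w‖ * Real.exp (C₆ * t)) ^ (1 + η₂)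
            ≤ ((C₃ * ‖z‖) * Real.exp (C₆ * t)) ^ (1 + η₂) :=
          Real.rpow_le_rpow (by positivity)
            (mul_le_mul_of_nonneg_right hwz (Real.exp_pos _).le) (by positivity)
        exact mul_le_mul_of_nonneg_right
          (mul_le_mul_of_nonneg_left h1 (by positivity)) (Real.exp_pos _).le
    _ = C₇ / C₆ * (C₃ ^ (1 + η₂) * ‖z‖ ^ (1 + η₂) * Real.exp (C₆ * t * (1 + η₂)))
          * Real.exp (C₆ * t) := by
        rw [Real.mul_rpow (by positivity) (Real.exp_pos _).le,
          Real.mul_rpow hC₃.le (norm_nonneg z), ← Real.exp_mul]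
    _ ≤ C₇ / C₆ * ((1 + C₃) ^ (2:ℝ) * ‖z‖ ^ (1 + η₂) * Real.exp (2 * C₆ * t))
          * Real.exp (C₆ * t) := by
        have he : Real.exp (C₆ * t * (1 + η₂)) ≤ Real.exp (2 * C₆ * t) :=
          Real.exp_le_exp.2 (by nlinarith [mul_nonneg (mul_nonneg hC₆.le ht) (sub_nonneg.2 hη₂')])
        have h2 : C₃ ^ (1 + η₂) * ‖z‖ ^ (1 + η₂) * Real.exp (C₆ * t * (1 + η₂))
            ≤ (1 + C₃) ^ (2:ℝ) * ‖z‖ ^ (1 + η₂) * Real.exp (2 * C₆ * t) :=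
          mul_le_mul (mul_le_mul_of_nonneg_right hC₃' (by positivity)) he
            (Real.exp_pos _).le (by positivity)
        exact mul_le_mul_of_nonneg_right
          (mul_le_mul_of_nonneg_left h2 (by positivity)) (Real.exp_pos _).le
    _ = (C₇ / C₆ * (1 + C₃) ^ (2:ℝ)) * Real.exp (3 * C₆ * t) * ‖z‖ ^ (1 + η₂) := by
        rw [show (3:ℝ) * C₆ * t = 2 * C₆ * t + C₆ * t by ring, Real.exp_add]
        ring

end main

/-- The jump coefficient `V_t(x,z) = κ_t(χ_t(x) + A(χ_t(x))z) − x`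
is well approximated by its linearization `A_t(x)z = Dκ_t(χ_t(x)) A(χ_t(x)) z`:
there is `c > 0`, depending only on `C₃, C₆, C₇, η₂`, such that
`|V_t(x,z) − A_t(x)z| ≤ c e^{c|t|} |z|^{1+η₂}` for all `t ∈ ℝ`, `x, z ∈ ℝ^d`.
Here `χ_t = κ_{−t}` is the forward flow. -/
theorem stmt11 (C₃ C₆ C₇ η₂ : ℝ) (hC₃ : 0 < C₃) (hC₆ : 0 < C₆) (hC₇ : 0 < C₇)
    (hη₂ : 0 < η₂) (hη₂' : η₂ ≤ 1) :
    ∃ c > 0, ∀ (d : ℕ), 1 ≤ d →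
      ∀ (b : EuclideanSpace ℝ (Fin d) → EuclideanSpace ℝ (Fin d)),
        Differentiable ℝ b →
        (∀ x, ‖fderiv ℝ b x‖ ≤ C₆) →
        (∀ x y, ‖fderiv ℝ b x - fderiv ℝ b y‖ ≤ C₇ * ‖x - y‖ ^ η₂) →
      ∀ (A : EuclideanSpace ℝ (Fin d) →
          (EuclideanSpace ℝ (Fin d) →L[ℝ] EuclideanSpace ℝ (Fin d))),
        (∀ x, ‖A x‖ ≤ C₃) →
      ∀ (κ : ℝ → EuclideanSpace ℝ (Fin d) → EuclideanSpace ℝ (Fin d))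
        (Dκ : ℝ → EuclideanSpace ℝ (Fin d) →
          (EuclideanSpace ℝ (Fin d) →L[ℝ] EuclideanSpace ℝ (Fin d))),
        (∀ x, κ 0 x = x) →
        (∀ (t : ℝ) (x : EuclideanSpace ℝ (Fin d)),
          HasDerivAt (fun s => κ s x) (-(b (κ t x))) t) →
        (∀ (t : ℝ) (x : EuclideanSpace ℝ (Fin d)), HasFDerivAt (κ t) (Dκ t x) x) →
        (∀ x, Dκ 0 x = ContinuousLinearMap.id ℝ (EuclideanSpace ℝ (Fin d))) →
        (∀ (t : ℝ) (x : EuclideanSpace ℝ (Fin d)),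
          HasDerivAt (fun s => Dκ s x) (-((fderiv ℝ b (κ t x)).comp (Dκ t x))) t) →
      ∀ (t : ℝ) (x z : EuclideanSpace ℝ (Fin d)),
        ‖(κ t (κ (-t) x + A (κ (-t) x) z) - x) - (Dκ t (κ (-t) x)) (A (κ (-t) x) z)‖
          ≤ c * Real.exp (c * |t|) * ‖z‖ ^ (1 + η₂) := by
  set c : ℝ := C₇ / C₆ * (1 + C₃) ^ (2:ℝ) + 3 * C₆ + 1 with hc
  have hcoef : 0 < C₇ / C₆ * (1 + C₃) ^ (2:ℝ) := by positivity
  have hcpos : 0 < c := by positivity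
  refine ⟨c, hcpos, ?_⟩
  intro d _ b hb hb1 hb2 A hA κ Dκ hκ0 hκ' _ hDκ0 hDκ' t x z
  have hfinal : ∀ u : ℝ, 0 ≤ u → u = |t| →
      (C₇ / C₆ * (1 + C₃) ^ (2:ℝ)) * Real.exp (3 * C₆ * u) * ‖z‖ ^ (1 + η₂)
        ≤ c * Real.exp (c * |t|) * ‖z‖ ^ (1 + η₂) := by
    intro u hu habs
    have h1 : C₇ / C₆ * (1 + C₃) ^ (2:ℝ) ≤ c := by rw [hc]; linarith
    have h2 : Real.exp (3 * C₆ * u) ≤ Real.exp (c * |t|) := by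
      rw [← habs]
      exact Real.exp_le_exp.2 (mul_le_mul_of_nonneg_right (by rw [hc]; nlinarith) hu)
    gcongr
  rcases le_or_gt 0 t with ht | ht
  · exact (main_est hC₃ hC₆ hC₇ hη₂ hη₂' hb hb1 hb2 hA hκ0 hκ' hDκ0 hDκ' ht x z).trans
      (hfinal t ht (abs_of_nonneg ht).symm)
  · -- reflect time
    set b' : EuclideanSpace ℝ (Fin d) → EuclideanSpace ℝ (Fin d) := fun u => -b u with hb'def
    set κ' : ℝ → EuclideanSpace ℝ (Fin d) → EuclideanSpace ℝ (Fin d) :=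
      fun s x => κ (-s) x with hκ'def
    set Dκ' : ℝ → EuclideanSpace ℝ (Fin d) →
        (EuclideanSpace ℝ (Fin d) →L[ℝ] EuclideanSpace ℝ (Fin d)) :=
      fun s x => Dκ (-s) x with hDκ'def
    have hfneg : ∀ u, fderiv ℝ b' u = -fderiv ℝ b u := fun u => fderiv_neg
    have hb'd : Differentiable ℝ b' := hb.neg
    have hb1' : ∀ u, ‖fderiv ℝ b' u‖ ≤ C₆ := fun u => by rw [hfneg, norm_neg]; exact hb1 u
    have hb2' : ∀ u v, ‖fderiv ℝ b' u - fderiv ℝ b' v‖ ≤ C₇ * ‖u - v‖ ^ η₂ := by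
      intro u v
      rw [hfneg, hfneg]
      have : -fderiv ℝ b u - -fderiv ℝ b v = -(fderiv ℝ b u - fderiv ℝ b v) := by abel
      rw [this, norm_neg]
      exact hb2 u v
    have hκ0' : ∀ x, κ' 0 x = x := by intro x; simp [hκ'def, hκ0]
    have hκ'' : ∀ (s : ℝ) (x), HasDerivAt (fun u => κ' u x) (-(b' (κ' s x))) s := by
      intro s x
      have h1 := (hκ' (-s) x).scomp s (hasDerivAt_neg s)
      simp only [Function.comp_def] at h1
      convert h1 using 1
      iterate 3 rfl
      simp [hb'def, hκ'def]
    have hDκ0' : ∀ x, Dκ' 0 x = ContinuousLinearMap.id ℝ (EuclideanSpace ℝ (Fin d)) := by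
      intro x; simp [hDκ'def, hDκ0]
    have hDκ'' : ∀ (s : ℝ) (x),
        HasDerivAt (fun u => Dκ' u x) (-((fderiv ℝ b' (κ' s x)).comp (Dκ' s x))) s := by
      intro s x
      have h1 := (hDκ' (-s) x).scomp s (hasDerivAt_neg s)
      simp only [Function.comp_def] at h1
      convert h1 using 1
      iterate 3 rfl
      rw [hfneg]
      simp only [hb'def, hκ'def, hDκ'def, hfneg, ContinuousLinearMap.neg_comp, neg_neg,
        neg_smul, one_smul]
    have ht' : 0 ≤ -t := by linarith
    have h := main_est hC₃ hC₆ hC₇ hη₂ hη₂' hb'd hb1' hb2' hA hκ0' hκ'' hDκ0' hDκ''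
      ht' x z
    simp only [hκ'def, hDκ'def, neg_neg] at h
    exact h.trans (hfinal (-t) ht' (abs_of_neg ht).symm)
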